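/- Let ω = (1/α)√(2(α−β)/n), μ = aα√(n/(2(α−β))), ν = ω + (αb/γ)√(n/(2(α−β))) with α > β ≥ 0, a, b > 0, γ < 0 satisfying 4γ(α−β) + nα²b < 0. Then the function φ(t) = (μ/(1 − e^{2μωt}))·((1/(ν−ω)) e^{2μωt} − 1/(ν+ω)) satisfies the differential inequality φ'(t) + (ωφ(t))² − (μ + νφ(t))² ≥ 0 for all t > 0. -/

import Mathlib

lemma key_hasDerivAt (μ ω ν t : ℝ) (h1 : ν - ω ≠ 0) (h2 : ν + ω ≠ 0)
    (h3 : 1 - Real.exp (2 * μ * ω * t) ≠ 0) :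
    HasDerivAt (fun t : ℝ => (μ / (1 - Real.exp (2 * μ * ω * t))) *
      ((1 / (ν - ω)) * Real.exp (2 * μ * ω * t) - 1 / (ν + ω)))
      ((μ + ν * ((μ / (1 - Real.exp (2 * μ * ω * t))) *
        ((1 / (ν - ω)) * Real.exp (2 * μ * ω * t) - 1 / (ν + ω)))) ^ 2 -
       (ω * ((μ / (1 - Real.exp (2 * μ * ω * t))) *
        ((1 / (ν - ω)) * Real.exp (2 * μ * ω * t) - 1 / (ν + ω)))) ^ 2) t := by
  have hlin : HasDerivAt (fun t : ℝ => 2 * μ * ω * t) (2 * μ * ω) t := by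
    simpa using (hasDerivAt_id t).const_mul (2 * μ * ω)
  have hE : HasDerivAt (fun t : ℝ => Real.exp (2 * μ * ω * t))
      (Real.exp (2 * μ * ω * t) * (2 * μ * ω)) t := hlin.exp
  have hA := (hasDerivAt_const t μ).div ((hasDerivAt_const t (1:ℝ)).sub hE) h3
  simp only [Pi.div_def, Pi.sub_def] at hA
  have hB := (hE.const_mul (1 / (ν - ω))).sub_const (1 / (ν + ω))
  have h := hA.mul hB
  refine h.congr_deriv ?_
  field_simp
  ring

/-- The explicit function `φ` solves the Riccati-type differential inequality
`φ' + (ωφ)² − (μ + νφ)² ≥ 0`. -/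
theorem phi_riccati (n : ℕ) (hn : 1 ≤ n) (a b α β γ : ℝ)
    (ha : 0 < a) (hb : 0 < b) (hβ : 0 ≤ β) (hαβ : β < α) (hγ : γ < 0)
    (hc : 4 * γ * (α - β) + n * α ^ 2 * b < 0) :
    let ω := (1 / α) * Real.sqrt (2 * (α - β) / n)
    let μ := a * α * Real.sqrt (n / (2 * (α - β)))
    let ν := ω + (α * b / γ) * Real.sqrt (n / (2 * (α - β)))
    let φ := fun t : ℝ => (μ / (1 - Real.exp (2 * μ * ω * t))) *
      ((1 / (ν - ω)) * Real.exp (2 * μ * ω * t) - 1 / (ν + ω))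
    ∀ t : ℝ, 0 < t → deriv φ t + (ω * φ t) ^ 2 - (μ + ν * φ t) ^ 2 ≥ 0 := by
  intro ω μ ν φ t ht
  have hα : 0 < α := lt_of_le_of_lt hβ hαβ
  have hab : 0 < α - β := sub_pos.mpr hαβ
  have hn' : (0:ℝ) < n := by exact_mod_cast hn
  set s : ℝ := Real.sqrt (n / (2 * (α - β))) with hs_def
  have hspos : 0 < s := Real.sqrt_pos.mpr (by positivity)
  have hs2 : s ^ 2 = n / (2 * (α - β)) := Real.sq_sqrt (by positivity)
  -- ω = 1 / (α * s)
  have hωeq : ω = 1 / (α * s) := by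
    have hinv : (2 * (α - β) / n) = (n / (2 * (α - β)))⁻¹ := by
      rw [inv_div]
    show (1 / α) * Real.sqrt (2 * (α - β) / n) = 1 / (α * s)
    rw [hinv, Real.sqrt_inv, ← hs_def]
    field_simp
  have hωpos : 0 < ω := by rw [hωeq]; positivity
  have hμpos : 0 < μ := by
    show 0 < a * α * s
    positivity
  -- ν - ω < 0
  have hνω : ν - ω < 0 := by
    show ω + (α * b / γ) * s - ω < 0
    have : α * b / γ < 0 := div_neg_of_pos_of_neg (by positivity) hγ
    have := mul_neg_of_neg_of_pos this hspos
    linarith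
  -- ν + ω > 0
  have hnum : 2 * γ + α ^ 2 * b * s ^ 2 < 0 := by
    have heq2 : 2 * γ + α ^ 2 * b * ((n:ℝ) / (2 * (α - β))) =
        (4 * γ * (α - β) + (n:ℝ) * α ^ 2 * b) / (2 * (α - β)) := by
      field_simp
      ring
    rw [hs2, heq2]
    exact div_neg_of_neg_of_pos hc (by positivity)
  have hνω' : 0 < ν + ω := by
    have heq : ν + ω = (2 * γ + α ^ 2 * b * s ^ 2) / (α * s * γ) := by
      show ω + (α * b / γ) * s + ω = _
      rw [hωeq]
      field_simp [hα.ne', hspos.ne', hγ.ne]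
      ring
    rw [heq]
    exact div_pos_of_neg_of_neg hnum (mul_neg_of_pos_of_neg (by positivity) hγ)
  have h1 : ν - ω ≠ 0 := ne_of_lt hνω
  have h2 : ν + ω ≠ 0 := ne_of_gt hνω'
  have h3 : 1 - Real.exp (2 * μ * ω * t) ≠ 0 := by
    have : (1:ℝ) < Real.exp (2 * μ * ω * t) := by
      rw [show (1:ℝ) = Real.exp 0 by simp]
      exact Real.exp_lt_exp.mpr (by positivity)
    linarith
  have hD := key_hasDerivAt μ ω ν t h1 h2 h3
  have hderiv : deriv φ t = (μ + ν * φ t) ^ 2 - (ω * φ t) ^ 2 := hD.deriv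
  rw [hderiv]
  linarith
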